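/- The modified Shaw–Traub algorithm simultaneously evaluates p, p' and p'': for every real r ≠ 0, the recursively defined quantities satisfy T^0_{n+1} = p(r), T^1_{n+1} = r·p'(r), and 2·T^2_{n+1} = r²·p''(r), where p' and p'' are the first and second derivatives of p. -/

import Mathlib

lemma st_aux2 (f w : ℕ → ℝ) (N : ℕ) :
    ∑ m ∈ Finset.range N, w m * ∑ k ∈ Finset.range m, f k
      = ∑ k ∈ Finset.range N, (∑ m ∈ Finset.Ico (k+1) N, w m) * f k := by
  induction N with
  | zero => simp
  | succ N ih =>
    rw [Finset.sum_range_succ, ih, Finset.sum_range_succ]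
    rw [show Finset.Ico (N+1) (N+1) = ∅ by simp]
    simp only [Finset.sum_empty, zero_mul, add_zero]
    rw [Finset.mul_sum, ← Finset.sum_add_distrib]
    apply Finset.sum_congr rfl
    intro k hk
    rw [Finset.sum_Ico_succ_top (by simp at hk; omega : k+1 ≤ N)]
    ring

lemma st_reindex (n : ℕ) (f : ℕ → ℝ) :
    ∑ k ∈ Finset.range n, f (n - k) = ∑ l ∈ Finset.Icc 1 n, f l := by
  apply Finset.sum_nbij' (i := fun k => n - k) (j := fun l => n - l) <;>
    intros a ha <;> simp_all [Finset.mem_range, Finset.mem_Icc] <;> omega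

lemma st_gauss (M : ℕ) : (∑ t ∈ Finset.range M, (t:ℝ)) * 2 = (M:ℝ) * ((M:ℝ) - 1) := by
  induction M with
  | zero => simp
  | succ M ih =>
    rw [Finset.sum_range_succ]
    push_cast
    linear_combination ih

lemma st_deriv1 (n : ℕ) (a : ℕ → ℝ) (b : ℝ) (p : ℝ → ℝ)
    (hp : ∀ x : ℝ, p x =
      x ^ (n + 1) + (∑ l ∈ Finset.Icc 1 n, a l * x ^ l) + (a 0 - b)) :
    ∀ x : ℝ, deriv p x =
      ((n:ℝ)+1) * x^n + ∑ l ∈ Finset.Icc 1 n, a l * ((l:ℝ) * x^(l-1)) := by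
  have hpf : p = fun x => x ^ (n + 1) + (∑ l ∈ Finset.Icc 1 n, a l * x ^ l) + (a 0 - b) :=
    funext hp
  intro x
  have h1 : HasDerivAt (fun x:ℝ => x^(n+1)) (((n:ℝ)+1) * x^n) x := by
    simpa using hasDerivAt_pow (n+1) x
  have h2 : HasDerivAt (fun x : ℝ => ∑ l ∈ Finset.Icc 1 n, a l * x^l)
      (∑ l ∈ Finset.Icc 1 n, a l * ((l:ℝ) * x^(l-1))) x := by
    apply HasDerivAt.fun_sum
    intro l _
    exact (hasDerivAt_pow l x).const_mul (a l)
  have := (h1.add h2).add_const (a 0 - b)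
  rw [hpf]
  exact this.deriv

lemma st_deriv2 (n : ℕ) (a : ℕ → ℝ) (b : ℝ) (p : ℝ → ℝ)
    (hp : ∀ x : ℝ, p x =
      x ^ (n + 1) + (∑ l ∈ Finset.Icc 1 n, a l * x ^ l) + (a 0 - b)) (x : ℝ) :
    deriv (deriv p) x =
      ((n:ℝ)+1) * ((n:ℝ) * x^(n-1))
        + ∑ l ∈ Finset.Icc 1 n, a l * ((l:ℝ) * (((l-1:ℕ):ℝ) * x^(l-1-1))) := by
  have hdf : deriv p = fun x =>
      ((n:ℝ)+1) * x^n + ∑ l ∈ Finset.Icc 1 n, a l * ((l:ℝ) * x^(l-1)) :=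
    funext (st_deriv1 n a b p hp)
  rw [hdf]
  have h1 : HasDerivAt (fun x:ℝ => ((n:ℝ)+1) * x^n) (((n:ℝ)+1) * ((n:ℝ) * x^(n-1))) x :=
    (hasDerivAt_pow n x).const_mul _
  have h2 : HasDerivAt (fun x : ℝ => ∑ l ∈ Finset.Icc 1 n, a l * ((l:ℝ) * x^(l-1)))
      (∑ l ∈ Finset.Icc 1 n, a l * ((l:ℝ) * (((l-1:ℕ):ℝ) * x^(l-1-1)))) x := by
    apply HasDerivAt.fun_sum
    intro l _
    exact ((hasDerivAt_pow (l-1) x).const_mul (l:ℝ)).const_mul (a l)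
  exact (h1.add h2).deriv

/-- The modified Shaw–Traub algorithm simultaneously evaluates `p`,
`p'` and `p''`: for every real `r ≠ 0`, `T⁰_{n+1} = p(r)`, `T¹_{n+1} = r·p'(r)`,
and `2·T²_{n+1} = r²·p''(r)`. -/
theorem shaw_traub_evaluates
    (n : ℕ) (hn : 2 ≤ n) (a : ℕ → ℝ) (b : ℝ)
    (p : ℝ → ℝ)
    (hp : ∀ x : ℝ, p x =
      x ^ (n + 1) + (∑ l ∈ Finset.Icc 1 n, a l * x ^ l) + (a 0 - b))
    (r : ℝ) (hr : r ≠ 0)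
    (Tm1 T0 T1 T2 : ℕ → ℝ)
    (hTm1 : ∀ i : ℕ, i ≤ n - 1 → Tm1 i = a (n - i) * r ^ (n - i))
    (hTm1n : Tm1 n = a 0 - b)
    (hT00 : T0 0 = r ^ (n + 1))
    (hT0 : ∀ i : ℕ, 1 ≤ i → i ≤ n + 1 → T0 i = Tm1 (i - 1) + T0 (i - 1))
    (hT11 : T1 1 = T0 0)
    (hT1 : ∀ i : ℕ, 2 ≤ i → i ≤ n + 1 → T1 i = T0 (i - 1) + T1 (i - 1))
    (hT22 : T2 2 = T0 0)
    (hT2 : ∀ i : ℕ, 3 ≤ i → i ≤ n + 1 → T2 i = T1 (i - 1) + T2 (i - 1)) :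
    T0 (n + 1) = p r ∧
      T1 (n + 1) = r * deriv p r ∧
      2 * T2 (n + 1) = r ^ 2 * deriv (deriv p) r := by
  have cT0 : ∀ i, i ≤ n + 1 → T0 i = r^(n+1) + ∑ k ∈ Finset.range i, Tm1 k := by
    intro i
    induction i with
    | zero => intro _; simp [hT00]
    | succ i ih =>
      intro h
      rw [hT0 (i+1) (by omega) h, Finset.sum_range_succ]
      have := ih (by omega)
      simp only [Nat.add_sub_cancel]
      rw [this]; ring
  have cT1 : ∀ i, 1 ≤ i → i ≤ n + 1 → T1 i = ∑ j ∈ Finset.range i, T0 j := by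
    intro i
    induction i with
    | zero => omega
    | succ i ih =>
      intro _ h
      rcases Nat.eq_zero_or_pos i with h0 | h1
      · subst h0; simpa using hT11
      · rw [hT1 (i+1) (by omega) h, Finset.sum_range_succ]
        simp only [Nat.add_sub_cancel]
        rw [ih h1 (by omega)]; ring
  have cT2 : ∀ i, 2 ≤ i → i ≤ n + 1 → T2 i = ∑ j ∈ Finset.Ico 1 i, T1 j := by
    intro i
    induction i with
    | zero => omega
    | succ i ih =>
      intro h2 h
      rcases Nat.lt_or_ge i 2 with h0 | h1
      · have : i = 1 := by omega
        subst this
        simpa [hT11] using hT22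
      · rw [hT2 (i+1) (by omega) h, Finset.sum_Ico_succ_top (by omega : 1 ≤ i)]
        simp only [Nat.add_sub_cancel]
        rw [ih h1 (by omega)]; ring
  have hTm1' : ∀ k ∈ Finset.range n, Tm1 k = a (n-k) * r^(n-k) := by
    intro k hk
    exact hTm1 k (by simp at hk; omega)
  -- Part 1
  have part1 : T0 (n+1) = p r := by
    rw [cT0 (n+1) le_rfl, Finset.sum_range_succ, hTm1n, hp r]
    rw [Finset.sum_congr rfl hTm1', st_reindex n (fun l => a l * r^l)]
    ring
  refine ⟨part1, ?_, ?_⟩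
  -- Part 2
  · have key : T1 (n+1)
        = ((n:ℝ)+1) * r^(n+1) + ∑ l ∈ Finset.Icc 1 n, (l:ℝ) * (a l * r^l) := by
      rw [cT1 (n+1) (by omega) le_rfl]
      rw [Finset.sum_congr rfl (fun j hj => cT0 j (by simp at hj; omega))]
      rw [Finset.sum_add_distrib, Finset.sum_const, Finset.card_range]
      have e1 : ∑ j ∈ Finset.range (n+1), ∑ k ∈ Finset.range j, Tm1 k
          = ∑ k ∈ Finset.range (n+1),
              (∑ m ∈ Finset.Ico (k+1) (n+1), (1:ℝ)) * Tm1 k := by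
        rw [← st_aux2 Tm1 (fun _ => 1) (n+1)]
        simp
      rw [e1]
      simp only [Finset.sum_const, Nat.card_Ico, nsmul_eq_mul, mul_one]
      rw [Finset.sum_range_succ]
      simp only [Nat.succ_sub_succ, Nat.sub_self, Nat.cast_zero, zero_mul, add_zero]
      have e2 : ∑ k ∈ Finset.range n, ((n - k : ℕ):ℝ) * Tm1 k
          = ∑ l ∈ Finset.Icc 1 n, (l:ℝ) * (a l * r^l) := by
        rw [Finset.sum_congr rfl (fun k hk => by rw [hTm1' k hk])]
        exact st_reindex n (fun l => (l:ℝ) * (a l * r^l))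
      rw [e2]
      push_cast
      ring
    rw [key, st_deriv1 n a b p hp r, mul_add, Finset.mul_sum]
    congr 1
    · ring
    · apply Finset.sum_congr rfl
      intro l hl
      simp only [Finset.mem_Icc] at hl
      have e : r * r^(l-1) = r^l := by
        rw [← pow_succ']
        congr 1
        omega
      linear_combination (-(l:ℝ) * a l) * e
  -- Part 3
  · have Wk : ∀ k, k < n →
        (∑ m ∈ Finset.Ico (k+1) (n+1), ((n-m:ℕ):ℝ)) * 2
          = ((n-k:ℕ):ℝ) * (((n-k:ℕ):ℝ) - 1) := by
      intro k hk
      have e : ∑ m ∈ Finset.Ico (k+1) (n+1), ((n-m:ℕ):ℝ)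
          = ∑ t ∈ Finset.range (n-k), (t:ℝ) := by
        apply Finset.sum_nbij' (i := fun m => n - m) (j := fun t => n - t) <;>
          intros a ha <;> simp_all [Finset.mem_Ico, Finset.mem_range] <;> omega
      rw [e, st_gauss]
    have key : 2 * T2 (n+1)
        = (n:ℝ) * ((n:ℝ)+1) * r^(n+1)
          + ∑ l ∈ Finset.Icc 1 n, ((l:ℝ) * ((l:ℝ)-1)) * (a l * r^l) := by
      rw [cT2 (n+1) (by omega) le_rfl]
      have h1 : ∑ j ∈ Finset.Ico 1 (n+1), T1 j
          = ∑ j ∈ Finset.range (n+1), ∑ m ∈ Finset.range j, T0 m := by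
        rw [Finset.sum_congr rfl (fun j hj => cT1 j
          (by simp [Finset.mem_Ico] at hj; omega) (by simp [Finset.mem_Ico] at hj; omega))]
        conv_rhs => rw [Finset.range_eq_Ico, Finset.sum_eq_sum_Ico_succ_bot (by omega)]
        simp
      rw [h1]
      have h2 : ∑ j ∈ Finset.range (n+1), ∑ m ∈ Finset.range j, T0 m
          = ∑ m ∈ Finset.range (n+1), ((n - m:ℕ):ℝ) * T0 m := by
        rw [show (∑ j ∈ Finset.range (n+1), ∑ m ∈ Finset.range j, T0 m)
            = ∑ j ∈ Finset.range (n+1), (1:ℝ) * ∑ m ∈ Finset.range j, T0 m from by simp]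
        rw [st_aux2]
        apply Finset.sum_congr rfl
        intro m hm
        simp [Nat.succ_sub_succ]
      rw [h2]
      have h3 : ∑ m ∈ Finset.range (n+1), ((n-m:ℕ):ℝ) * T0 m
          = (∑ m ∈ Finset.range (n+1), ((n-m:ℕ):ℝ)) * r^(n+1)
            + ∑ k ∈ Finset.range n,
                (∑ m ∈ Finset.Ico (k+1) (n+1), ((n-m:ℕ):ℝ)) * (a (n-k) * r^(n-k)) := by
        rw [Finset.sum_congr rfl (fun m hm =>
          by rw [cT0 m (by simp at hm; omega)])]
        simp only [mul_add]
        rw [Finset.sum_add_distrib, ← Finset.sum_mul,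
          st_aux2 Tm1 (fun m => ((n-m:ℕ):ℝ)) (n+1)]
        congr 1
        rw [Finset.sum_range_succ]
        rw [show Finset.Ico (n+1) (n+1) = ∅ from by simp]
        simp only [Finset.sum_empty, zero_mul, add_zero]
        exact Finset.sum_congr rfl (fun k hk => by rw [hTm1' k hk])
      rw [h3]
      have hA : (∑ m ∈ Finset.range (n+1), ((n-m:ℕ):ℝ)) * 2 = (n:ℝ) * ((n:ℝ)+1) := by
        have e : ∑ m ∈ Finset.range (n+1), ((n-m:ℕ):ℝ)
            = ∑ m ∈ Finset.range (n+1), (m:ℝ) := by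
          rw [← Finset.sum_range_reflect (fun m => (m:ℝ)) (n+1)]
          simp
        rw [e, st_gauss]
        push_cast
        ring
      rw [← st_reindex n (fun l => ((l:ℝ) * ((l:ℝ)-1)) * (a l * r^l))]
      rw [mul_add, Finset.mul_sum]
      congr 1
      · linear_combination r^(n+1) * hA
      · apply Finset.sum_congr rfl
        intro k hk
        simp only [Finset.mem_range] at hk
        have := Wk k hk
        linear_combination (a (n-k) * r^(n-k)) * this
    rw [key, st_deriv2 n a b p hp r]
    conv_rhs => rw [mul_add, Finset.mul_sum]
    congr 1
    · have e : r^2 * r^(n-1) = r^(n+1) := by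
        rw [← pow_add]
        congr 1
        omega
      linear_combination (-(n:ℝ) * ((n:ℝ)+1)) * e
    · apply Finset.sum_congr rfl
      intro l hl
      simp only [Finset.mem_Icc] at hl
      rcases Nat.lt_or_ge l 2 with h1 | h2
      · have : l = 1 := by omega
        subst this
        norm_num
      · have e : r^2 * r^(l-1-1) = r^l := by
          rw [← pow_add]
          congr 1
          omega
        have ec : ((l-1:ℕ):ℝ) = (l:ℝ) - 1 := by
          push_cast [Nat.cast_sub (by omega : 1 ≤ l)]
          ring
        rw [ec]
        linear_combination (-((l:ℝ)) * ((l:ℝ)-1) * a l) * e
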